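/- For every u in the range of the spectral projector of H = -Δ + |x|² on [0, λ], λ ≥ 1, one has |u(x)| ≤ C λ^{d/4} exp(-c|x|²/(2λ)) ‖u‖_{L²(ℝ^d)} for all x ∈ ℝ^d, where c, C > 0 are independent of x and λ. -/

import Mathlib

open MeasureTheory Real Finset

/-- Pointwise bound for spectrally localised functions of the harmonic oscillator:
there exist `c, C > 0` such that for every `λ ≥ 1` and every `u` in the range of the
spectral projector on `[0, λ]` (i.e. `u = ∑_{lam j ≤ λ} c_j φ_j`),
`|u(x)| ≤ C λ^{d/4} exp(-c |x|²/(2λ)) ‖u‖_{L²}` for all `x ∈ ℝ^d`. -/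
theorem stmt9 (d : ℕ) (hd : 1 ≤ d)
    (φ : ℕ → EuclideanSpace ℝ (Fin d) → ℂ) (lam : ℕ → ℝ) (hlam : ∀ j, 0 < lam j)
    (hL2 : ∀ j, MemLp (φ j) 2 (volume : Measure (EuclideanSpace ℝ (Fin d))))
    (hortho : ∀ i j, ∫ x, φ i x * (starRingEnd ℂ) (φ j x) = if i = j then (1 : ℂ) else 0)
    (hfin : ∀ lambda : ℝ, {j | lam j ≤ lambda}.Finite)
    (hSum : ∀ t : ℝ, 0 < t → ∀ x,
      Summable (fun j => Real.exp (-t * lam j) * ‖φ j x‖ ^ 2))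
    (hMehler : ∀ t : ℝ, 0 < t → ∀ x,
      ∑' j, Real.exp (-t * lam j) * ‖φ j x‖ ^ 2 =
        (2 * π * Real.sinh (2 * t)) ^ (-(d : ℝ)/2) * Real.exp (-‖x‖ ^ 2 * Real.tanh t)) :
    ∃ c > 0, ∃ C > 0, ∀ lambda : ℝ, 1 ≤ lambda →
      ∀ (co : ℕ → ℂ) (u : EuclideanSpace ℝ (Fin d) → ℂ),
        (∀ x, u x = ∑ j ∈ (hfin lambda).toFinset, co j * φ j x) →
        ∀ x, ‖u x‖ ≤
          C * lambda ^ ((d : ℝ)/4) * Real.exp (-c * ‖x‖ ^ 2 / (2 * lambda)) *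
            (∫ y, ‖u y‖ ^ 2) ^ ((1 : ℝ)/2) := by
  have hπ : (0:ℝ) < π := Real.pi_pos
  refine ⟨(Real.cosh 1)⁻¹, inv_pos.mpr (Real.cosh_pos 1), Real.exp (1/2) * (4*π) ^ (-(d:ℝ)/4),
    by positivity, ?_⟩
  intro lambda hl co u hu x
  have hlpos : (0:ℝ) < lambda := lt_of_lt_of_le one_pos hl
  set F := (hfin lambda).toFinset with hF
  -- integrability of products
  have hstar : ∀ j, MemLp (fun y => (starRingEnd ℂ) (φ j y)) 2
      (volume : Measure (EuclideanSpace ℝ (Fin d))) := by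
    intro j
    refine (hL2 j).of_le_mul (c := 1)
      (Complex.continuous_conj.comp_aestronglyMeasurable (hL2 j).1) ?_
    filter_upwards with y; simp
  have hint : ∀ i j, Integrable (fun y => φ i y * (starRingEnd ℂ) (φ j y))
      (volume : Measure (EuclideanSpace ℝ (Fin d))) := by
    intro i j
    have h := (hstar j).smul (𝕜 := ℂ) (hL2 i) (p := 2) (q := 2) (r := 1)
    rw [memLp_one_iff_integrable] at h
    exact h.congr (by filter_upwards with y; simp [mul_comm])
  -- Parseval
  have hI : (∫ y, ‖u y‖ ^ 2) = ∑ j ∈ F, ‖co j‖ ^ 2 := by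
    have h1 : ∀ y, (‖u y‖ ^ 2 : ℝ)
        = (∑ i ∈ F, ∑ j ∈ F, (co i * (starRingEnd ℂ) (co j))
            * (φ i y * (starRingEnd ℂ) (φ j y))).re := by
      intro y
      have : u y * (starRingEnd ℂ) (u y)
          = (∑ i ∈ F, ∑ j ∈ F, (co i * (starRingEnd ℂ) (co j))
            * (φ i y * (starRingEnd ℂ) (φ j y))) := by
        rw [hu y, map_sum, Finset.sum_mul_sum]
        refine Finset.sum_congr rfl fun i _ => Finset.sum_congr rfl fun j _ => ?_
        simp only [map_mul]
        ring
      rw [← this, Complex.mul_conj]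
      simp [Complex.sq_norm]
    rw [integral_congr_ae (Filter.Eventually.of_forall h1)]
    have hint2 : ∀ i ∈ F, Integrable
        (fun y => ∑ j ∈ F, (co i * (starRingEnd ℂ) (co j)) * (φ i y * (starRingEnd ℂ) (φ j y)))
        (volume : Measure (EuclideanSpace ℝ (Fin d))) :=
      fun i _ => integrable_finset_sum F (fun j _ => ((hint i j).const_mul _))
    simp only [← RCLike.re_eq_complex_re]
    rw [integral_re (integrable_finset_sum F hint2)]
    rw [integral_finset_sum F hint2]
    have : ∀ i ∈ F, (∫ y, ∑ j ∈ F, (co i * (starRingEnd ℂ) (co j))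
        * (φ i y * (starRingEnd ℂ) (φ j y))) = co i * (starRingEnd ℂ) (co i) := by
      intro i hi
      rw [integral_finset_sum F (fun j _ => ((hint i j).const_mul _))]
      have : ∀ j ∈ F, (∫ y, (co i * (starRingEnd ℂ) (co j)) * (φ i y * (starRingEnd ℂ) (φ j y)))
          = if i = j then co i * (starRingEnd ℂ) (co j) else 0 := by
        intro j _
        simp only [← smul_eq_mul (α := ℂ), integral_smul]
        simp only [smul_eq_mul]
        rw [hortho i j]
        split <;> simp
      rw [Finset.sum_congr rfl this, Finset.sum_ite_eq F i
        (fun j => co i * (starRingEnd ℂ) (co j)), if_pos hi]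
    rw [Finset.sum_congr rfl this]
    simp only [RCLike.re_eq_complex_re, Complex.re_sum]
    refine Finset.sum_congr rfl fun j _ => ?_
    rw [Complex.mul_conj]
    simp [Complex.sq_norm]
  -- Cauchy-Schwarz
  have hCS : ‖u x‖ ^ 2
      ≤ (∑ j ∈ F, ‖co j‖ ^ 2) * ∑ j ∈ F, ‖φ j x‖ ^ 2 := by
    have h1 : ‖u x‖ ≤ ∑ j ∈ F, ‖co j‖ * ‖φ j x‖ := by
      rw [hu x]
      refine le_trans (norm_sum_le _ _) ?_
      simp [map_mul, le_refl]
    calc ‖u x‖ ^ 2 ≤ (∑ j ∈ F, ‖co j‖ * ‖φ j x‖) ^ 2 := by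
          exact pow_le_pow_left₀ (norm_nonneg _) h1 2
      _ ≤ _ := Finset.sum_mul_sq_le_sq_mul_sq F _ _
  -- kernel bound
  set t : ℝ := 1/lambda with htdef
  have ht : 0 < t := by positivity
  have hker : (∑ j ∈ F, ‖φ j x‖ ^ 2)
      ≤ Real.exp 1 * ((2 * π * Real.sinh (2 * t)) ^ (-(d:ℝ)/2)
          * Real.exp (-‖x‖ ^ 2 * Real.tanh t)) := by
    rw [← hMehler t ht x]
    calc ∑ j ∈ F, ‖φ j x‖ ^ 2
        ≤ ∑ j ∈ F, Real.exp 1 * (Real.exp (-t * lam j) * ‖φ j x‖ ^ 2) := by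
          refine Finset.sum_le_sum fun j hj => ?_
          have hjle : lam j ≤ lambda := by
            have := (Set.Finite.mem_toFinset _).1 hj
            simpa using this
          have h2 : (1:ℝ) ≤ Real.exp 1 * Real.exp (-t * lam j) := by
            rw [← Real.exp_add]
            have h3 : t * lam j ≤ 1 := by
              rw [htdef]
              rw [div_mul_eq_mul_div, one_mul, div_le_one hlpos]
              exact hjle
            have : (0:ℝ) ≤ 1 + -t * lam j := by linarith
            calc (1:ℝ) = Real.exp 0 := by simp
              _ ≤ _ := Real.exp_le_exp.mpr this
          calc ‖φ j x‖ ^ 2 = 1 * ‖φ j x‖ ^ 2 := (one_mul _).symm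
            _ ≤ (Real.exp 1 * Real.exp (-t * lam j)) * ‖φ j x‖ ^ 2 :=
                mul_le_mul_of_nonneg_right h2 (sq_nonneg _)
            _ = Real.exp 1 * (Real.exp (-t * lam j) * ‖φ j x‖ ^ 2) := by ring
      _ = Real.exp 1 * ∑ j ∈ F, Real.exp (-t * lam j) * ‖φ j x‖ ^ 2 := by
          rw [Finset.mul_sum]
      _ ≤ Real.exp 1 * ∑' j, Real.exp (-t * lam j) * ‖φ j x‖ ^ 2 := by
          refine mul_le_mul_of_nonneg_left ?_ (Real.exp_nonneg 1)
          exact Summable.sum_le_tsum F (fun j _ => by positivity) (hSum t ht x)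
  -- numeric bound on sinh factor
  have hsinh : (2 * π * Real.sinh (2 * t)) ^ (-(d:ℝ)/2)
      ≤ lambda ^ ((d:ℝ)/2) * (4*π) ^ (-(d:ℝ)/2) := by
    have h1 : 4 * π / lambda ≤ 2 * π * Real.sinh (2 * t) := by
      have h2 : 2 * t ≤ Real.sinh (2 * t) := Real.self_le_sinh_iff.mpr (by positivity)
      have : 4 * π / lambda = 2 * π * (2 * t) := by rw [htdef]; field_simp; ring
      rw [this]
      exact mul_le_mul_of_nonneg_left h2 (by positivity)
    have h2 : (2 * π * Real.sinh (2 * t)) ^ (-(d:ℝ)/2) ≤ (4 * π / lambda) ^ (-(d:ℝ)/2) := by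
      refine Real.rpow_le_rpow_of_nonpos (by positivity) h1 ?_
      have : (0:ℝ) ≤ (d:ℝ) := Nat.cast_nonneg d
      rw [neg_div]
      linarith [div_nonneg this (by norm_num : (0:ℝ) ≤ 2)]
    refine h2.trans_eq ?_
    rw [neg_div, Real.rpow_neg (by positivity), Real.rpow_neg (by positivity),
      Real.div_rpow (by positivity) hlpos.le, inv_div, div_eq_mul_inv]
  -- tanh bound
  have htanh : Real.exp (-‖x‖ ^ 2 * Real.tanh t)
      ≤ Real.exp (-(Real.cosh 1)⁻¹ * ‖x‖ ^ 2 / lambda) := by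
    rw [Real.exp_le_exp]
    have h1 : 1 / (lambda * Real.cosh 1) ≤ Real.tanh t := by
      rw [Real.tanh_eq_sinh_div_cosh]
      have h2 : t / Real.cosh 1 ≤ Real.sinh t / Real.cosh t := by
        refine div_le_div₀ (by
          exact le_trans ht.le (Real.self_le_sinh_iff.mpr ht.le))
          (Real.self_le_sinh_iff.mpr ht.le) (Real.cosh_pos _) ?_
        rw [Real.cosh_le_cosh]
        rw [abs_of_nonneg ht.le, abs_one, htdef]
        rw [div_le_one hlpos]
        exact hl
      refine le_trans (le_of_eq ?_) h2
      rw [htdef]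
      rw [div_div]
    have hx2 : (0:ℝ) ≤ ‖x‖ ^ 2 := sq_nonneg _
    have h2 := mul_le_mul_of_nonneg_left h1 hx2
    have heq : -(Real.cosh 1)⁻¹ * ‖x‖ ^ 2 / lambda
        = -(‖x‖ ^ 2 * (1 / (lambda * Real.cosh 1))) := by
      rw [one_div, mul_inv]
      ring
    rw [heq]
    nlinarith [h2]
  -- assemble
  have hInn : (0:ℝ) ≤ ∫ y, ‖u y‖ ^ 2 :=
    integral_nonneg fun y => sq_nonneg _
  have hR0 : 0 ≤ Real.exp (1/2) * (4*π) ^ (-(d:ℝ)/4) * lambda ^ ((d:ℝ)/4)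
      * Real.exp (-(Real.cosh 1)⁻¹ * ‖x‖ ^ 2 / (2 * lambda))
      * (∫ y, ‖u y‖ ^ 2) ^ ((1:ℝ)/2) := by
    have h5 : (0:ℝ) ≤ (∫ y, ‖u y‖ ^ 2) ^ ((1:ℝ)/2) := Real.rpow_nonneg hInn _
    positivity
  have hRsq : (Real.exp (1/2) * (4*π) ^ (-(d:ℝ)/4) * lambda ^ ((d:ℝ)/4)
      * Real.exp (-(Real.cosh 1)⁻¹ * ‖x‖ ^ 2 / (2 * lambda))
      * (∫ y, ‖u y‖ ^ 2) ^ ((1:ℝ)/2)) ^ 2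
      = Real.exp 1 * (lambda ^ ((d:ℝ)/2) * (4*π) ^ (-(d:ℝ)/2))
      * Real.exp (-(Real.cosh 1)⁻¹ * ‖x‖ ^ 2 / lambda) * ∫ y, ‖u y‖ ^ 2 := by
    have e1 : Real.exp (1/2) ^ 2 = Real.exp 1 := by
      rw [← Real.exp_nat_mul]; norm_num
    have e2 : ((4*π) ^ (-(d:ℝ)/4)) ^ 2 = (4*π) ^ (-(d:ℝ)/2) := by
      rw [← Real.rpow_natCast ((4*π) ^ (-(d:ℝ)/4)) 2, ← Real.rpow_mul (by positivity)]
      congr 1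
      push_cast
      ring
    have e3 : (lambda ^ ((d:ℝ)/4)) ^ 2 = lambda ^ ((d:ℝ)/2) := by
      rw [← Real.rpow_natCast (lambda ^ ((d:ℝ)/4)) 2, ← Real.rpow_mul hlpos.le]
      congr 1
      push_cast
      ring
    have e4 : (Real.exp (-(Real.cosh 1)⁻¹ * ‖x‖ ^ 2 / (2 * lambda))) ^ 2
        = Real.exp (-(Real.cosh 1)⁻¹ * ‖x‖ ^ 2 / lambda) := by
      rw [← Real.exp_nat_mul]
      congr 1
      field_simp
      ring
    have e5 : ((∫ y, ‖u y‖ ^ 2) ^ ((1:ℝ)/2)) ^ 2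
        = ∫ y, ‖u y‖ ^ 2 := by
      rw [← Real.rpow_natCast ((∫ y, ‖u y‖ ^ 2) ^ ((1:ℝ)/2)) 2,
        ← Real.rpow_mul hInn]
      norm_num
    calc (Real.exp (1/2) * (4*π) ^ (-(d:ℝ)/4) * lambda ^ ((d:ℝ)/4)
        * Real.exp (-(Real.cosh 1)⁻¹ * ‖x‖ ^ 2 / (2 * lambda))
        * (∫ y, ‖u y‖ ^ 2) ^ ((1:ℝ)/2)) ^ 2
        = Real.exp (1/2) ^ 2 * ((4*π) ^ (-(d:ℝ)/4)) ^ 2 * (lambda ^ ((d:ℝ)/4)) ^ 2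
          * (Real.exp (-(Real.cosh 1)⁻¹ * ‖x‖ ^ 2 / (2 * lambda))) ^ 2
          * ((∫ y, ‖u y‖ ^ 2) ^ ((1:ℝ)/2)) ^ 2 := by ring
      _ = _ := by rw [e1, e2, e3, e4, e5]; ring
  have hmain : ‖u x‖ ^ 2
      ≤ (Real.exp (1/2) * (4*π) ^ (-(d:ℝ)/4) * lambda ^ ((d:ℝ)/4)
      * Real.exp (-(Real.cosh 1)⁻¹ * ‖x‖ ^ 2 / (2 * lambda))
      * (∫ y, ‖u y‖ ^ 2) ^ ((1:ℝ)/2)) ^ 2 := by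
    rw [hRsq]
    calc ‖u x‖ ^ 2
        ≤ (∑ j ∈ F, ‖co j‖ ^ 2) * ∑ j ∈ F, ‖φ j x‖ ^ 2 := hCS
      _ ≤ (∑ j ∈ F, ‖co j‖ ^ 2)
          * (Real.exp 1 * ((2 * π * Real.sinh (2 * t)) ^ (-(d:ℝ)/2)
              * Real.exp (-‖x‖ ^ 2 * Real.tanh t))) := by
          refine mul_le_mul_of_nonneg_left hker ?_
          exact Finset.sum_nonneg fun j _ => sq_nonneg _
      _ ≤ (∑ j ∈ F, ‖co j‖ ^ 2)
          * (Real.exp 1 * ((lambda ^ ((d:ℝ)/2) * (4*π) ^ (-(d:ℝ)/2))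
              * Real.exp (-(Real.cosh 1)⁻¹ * ‖x‖ ^ 2 / lambda))) := by
          refine mul_le_mul_of_nonneg_left ?_
            (Finset.sum_nonneg fun j _ => sq_nonneg _)
          refine mul_le_mul_of_nonneg_left ?_ (Real.exp_nonneg 1)
          exact mul_le_mul hsinh htanh (Real.exp_nonneg _) (by positivity)
      _ = Real.exp 1 * (lambda ^ ((d:ℝ)/2) * (4*π) ^ (-(d:ℝ)/2))
          * Real.exp (-(Real.cosh 1)⁻¹ * ‖x‖ ^ 2 / lambda)
          * ∫ y, ‖u y‖ ^ 2 := by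
          rw [hI]; ring
  have hfinal := Real.sqrt_le_sqrt hmain
  rwa [Real.sqrt_sq (norm_nonneg _), Real.sqrt_sq hR0] at hfinal
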